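/- Let s0 > 0. Then there exists a constant C (depending only on s0) such that for all s ≥ s0, ∫_{1}^{∞} (Φ'(z))² / ( Φ(z+s) - Φ(z) ) dz ≤ C; indeed the integrand is bounded above for z ≥ 1 by a constant multiple (depending on s0) of 1/z². -/

import Mathlib

open MeasureTheory Real Set Filter

/-- The standard normal density `Φ'(z) = (1/√(2π)) e^{-z²/2}`. -/
noncomputable def Φ' (z : ℝ) : ℝ := (Real.sqrt (2 * Real.pi))⁻¹ * Real.exp (-z ^ 2 / 2)

/-- The standard normal cumulative distribution function `Φ`. -/
noncomputable def Φ (z : ℝ) : ℝ := ∫ u in Set.Iic z, Φ' u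

lemma Φ'_pos (z : ℝ) : 0 < Φ' z := by
  unfold Φ'
  have : 0 < Real.sqrt (2 * Real.pi) := Real.sqrt_pos.mpr (by positivity)
  positivity

lemma Φ'_cont : Continuous Φ' := by
  unfold Φ'
  fun_prop

lemma Φ'_integrable : Integrable Φ' := by
  have h := (integrable_exp_neg_mul_sq (b := (1:ℝ)/2) (by norm_num)).const_mul
    (Real.sqrt (2 * Real.pi))⁻¹
  refine h.congr (Eventually.of_forall fun z => ?_)
  unfold Φ'
  ring_nf

lemma Φ_mono : Monotone Φ := fun a b hab =>
  setIntegral_mono_set Φ'_integrable.integrableOn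
    (Eventually.of_forall fun x => (Φ'_pos x).le)
    (HasSubset.Subset.eventuallyLE (Iic_subset_Iic.mpr hab))

lemma Φ_diff {a b : ℝ} (hab : a ≤ b) : Φ b - Φ a = ∫ u in Set.Ioc a b, Φ' u := by
  unfold Φ
  rw [intervalIntegral.integral_Iic_sub_Iic Φ'_integrable.integrableOn Φ'_integrable.integrableOn,
    intervalIntegral.integral_of_le hab]

lemma Φ'_anti {a b : ℝ} (ha : 0 ≤ a) (hab : a ≤ b) : Φ' b ≤ Φ' a := by
  unfold Φ'
  have : 0 < Real.sqrt (2 * Real.pi) := Real.sqrt_pos.mpr (by positivity)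
  gcongr

/-- key lower bound on the increment of `Φ`. -/
lemma Φ_lower {s0 : ℝ} (hs0 : 0 < s0) {z s : ℝ} (hz : 0 ≤ z) (hs : s0 ≤ s) :
    s0 * Φ' (z + s0) ≤ Φ (z + s) - Φ z := by
  rw [Φ_diff (by linarith)]
  have h1 : s0 * Φ' (z + s0) ≤ ∫ u in Set.Ioc z (z + s0), Φ' u := by
    have hc : (∫ _ in Set.Ioc z (z + s0), Φ' (z + s0)) = s0 * Φ' (z + s0) := by
      rw [setIntegral_const, Real.volume_real_Ioc_of_le (by linarith),
        smul_eq_mul]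
      ring_nf
    rw [← hc]
    refine setIntegral_mono_on ((integrableOn_const_iff (hC := enorm_ne_top)).mpr ?_)
      Φ'_integrable.integrableOn measurableSet_Ioc fun u hu => Φ'_anti ?_ ?_
    · right; rw [Real.volume_Ioc]; exact ENNReal.ofReal_lt_top
    · linarith [hu.1]
    · exact hu.2
  refine h1.trans (setIntegral_mono_set Φ'_integrable.integrableOn
    (Eventually.of_forall fun x => (Φ'_pos x).le)
    (HasSubset.Subset.eventuallyLE (Set.Ioc_subset_Ioc_right (by linarith))))

/-- elementary bound `z² ≤ 4 eᶻ` for `z ≥ 0`. -/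
lemma sq_le_four_exp {z : ℝ} (hz : 0 ≤ z) : z ^ 2 ≤ 4 * Real.exp z := by
  have h1 : z / 2 + 1 ≤ Real.exp (z / 2) := Real.add_one_le_exp (z / 2)
  have h2 : Real.exp z = Real.exp (z / 2) ^ 2 := by
    rw [sq, ← Real.exp_add]; ring_nf
  nlinarith [Real.exp_pos (z / 2)]

/-- uniform bound on `∫_1^∞ (Φ'(z))²/(Φ(z+s) - Φ(z)) dz` for `s ≥ s0`, the
integrand being dominated by a constant multiple of `1/z²` on `[1, ∞)`. -/
theorem tail_bound (s0 : ℝ) (hs0 : 0 < s0) :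
    ∃ C M : ℝ, ∀ s : ℝ, s0 ≤ s →
      IntegrableOn (fun z : ℝ => (Φ' z) ^ 2 / (Φ (z + s) - Φ z)) (Set.Ioi 1) volume ∧
      (∫ z in Set.Ioi (1:ℝ), (Φ' z) ^ 2 / (Φ (z + s) - Φ z)) ≤ C ∧
      ∀ z : ℝ, 1 ≤ z → (Φ' z) ^ 2 / (Φ (z + s) - Φ z) ≤ M / z ^ 2 := by
  set c : ℝ := (Real.sqrt (2 * Real.pi))⁻¹ with hc
  have hcpos : 0 < c := by
    have : 0 < Real.sqrt (2 * Real.pi) := Real.sqrt_pos.mpr (by positivity)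
    positivity
  set A : ℝ := s0 ^ 2 / 2 + (1 + s0) ^ 2 / 2 with hA
  set M : ℝ := 4 * c / s0 * Real.exp A with hM
  have hMpos : 0 < M := by positivity
  -- the pointwise bound
  have hpoint : ∀ s : ℝ, s0 ≤ s → ∀ z : ℝ, 1 ≤ z →
      (Φ' z) ^ 2 / (Φ (z + s) - Φ z) ≤ M / z ^ 2 := by
    intro s hs z hz
    have hz0 : (0:ℝ) ≤ z := by linarith
    have hden : s0 * Φ' (z + s0) ≤ Φ (z + s) - Φ z := Φ_lower hs0 hz0 hs
    have hdpos : 0 < s0 * Φ' (z + s0) := by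
      have := Φ'_pos (z + s0); positivity
    have step1 : (Φ' z) ^ 2 / (Φ (z + s) - Φ z) ≤ (Φ' z) ^ 2 / (s0 * Φ' (z + s0)) := by
      gcongr
    refine step1.trans ?_
    rw [div_le_div_iff₀ hdpos (by positivity)]
    -- core exponential inequality
    have hexp2 : Φ' z ^ 2 = c ^ 2 * Real.exp (-z ^ 2) := by
      unfold Φ'
      rw [← hc, mul_pow]
      congr 1
      rw [sq, ← Real.exp_add]
      ring_nf
    have hRHS : M * (s0 * Φ' (z + s0))
        = c ^ 2 * (4 * Real.exp (A - (z + s0) ^ 2 / 2)) := by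
      unfold Φ'
      rw [← hc, hM, Real.exp_sub, neg_div, Real.exp_neg]
      field_simp
    rw [hexp2, hRHS]
    have ht : z ≤ z ^ 2 + (A - (z + s0) ^ 2 / 2) := by
      rw [hA]; nlinarith [sq_nonneg (z - (1 + s0))]
    have h1 : z ^ 2 ≤ 4 * Real.exp (z ^ 2 + (A - (z + s0) ^ 2 / 2)) := by
      have := Real.exp_le_exp.mpr ht
      have := sq_le_four_exp hz0
      linarith
    have hcore : Real.exp (-z ^ 2) * z ^ 2 ≤ 4 * Real.exp (A - (z + s0) ^ 2 / 2) := by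
      have h2 : Real.exp (-z ^ 2) * z ^ 2
          ≤ Real.exp (-z ^ 2) * (4 * Real.exp (z ^ 2 + (A - (z + s0) ^ 2 / 2))) := by
        have := Real.exp_pos (-z ^ 2)
        nlinarith
      refine h2.trans_eq ?_
      rw [← mul_assoc, mul_comm (Real.exp _) 4, mul_assoc, ← Real.exp_add]
      ring_nf
    calc c ^ 2 * Real.exp (-z ^ 2) * z ^ 2
        = c ^ 2 * (Real.exp (-z ^ 2) * z ^ 2) := by ring
      _ ≤ c ^ 2 * (4 * Real.exp (A - (z + s0) ^ 2 / 2)) := by gcongr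
  have hg : IntegrableOn (fun z : ℝ => M / z ^ 2) (Set.Ioi 1) volume := by
    have h := ((integrableOn_Ioi_rpow_iff one_pos).mpr
      (by norm_num : (-2:ℝ) < -1)).const_mul M
    refine IntegrableOn.congr_fun h (fun z hz => ?_) measurableSet_Ioi
    have hz0 : (0:ℝ) < z := lt_trans one_pos hz
    rw [Real.rpow_neg hz0.le, show ((2:ℝ)) = ((2:ℕ):ℝ) by norm_num,
      Real.rpow_natCast, div_eq_mul_inv]
  have hmeasf : ∀ s : ℝ, Measurable (fun z : ℝ => (Φ' z) ^ 2 / (Φ (z + s) - Φ z)) :=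
    fun s => ((Φ'_cont.pow 2).measurable).div
      ((Φ_mono.measurable.comp (measurable_add_const s)).sub Φ_mono.measurable)
  have hfnonneg : ∀ s, s0 ≤ s → ∀ z : ℝ, 1 ≤ z →
      0 ≤ (Φ' z) ^ 2 / (Φ (z + s) - Φ z) := by
    intro s hs z hz
    have hden := Φ_lower hs0 (by linarith : (0:ℝ) ≤ z) hs
    have hd : 0 < s0 * Φ' (z + s0) := by have := Φ'_pos (z + s0); positivity
    exact div_nonneg (sq_nonneg _) (by linarith)
  have hint : ∀ s, s0 ≤ s →
      IntegrableOn (fun z : ℝ => (Φ' z) ^ 2 / (Φ (z + s) - Φ z)) (Set.Ioi 1) volume := by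
    intro s hs
    refine Integrable.mono' hg (hmeasf s).aestronglyMeasurable
      ((ae_restrict_iff' measurableSet_Ioi).mpr (.of_forall fun z hz => ?_))
    rw [Real.norm_eq_abs, abs_of_nonneg (hfnonneg s hs z hz.le)]
    exact hpoint s hs z hz.le
  refine ⟨∫ z in Set.Ioi (1:ℝ), M / z ^ 2, M, fun s hs => ⟨hint s hs, ?_, hpoint s hs⟩⟩
  exact setIntegral_mono_on (hint s hs) hg measurableSet_Ioi fun z hz => hpoint s hs z hz.le
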